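/- Analysis of the heavy/light triangle algorithm: Assume |R|, |S|, |T| ≥ 1 and set θ = √(|R|·|S| / |T|). For a ∈ Dom(A) let deg_R(a) = |{b : (a,b) ∈ R}|, and partition R into R^heavy = {(a,b) ∈ R : deg_R(a) > θ} and R^light = R ∖ R^heavy. Then the join sizes satisfy |{(a,b,c) : (a,b) ∈ R^heavy, (b,c) ∈ S}| ≤ √(|R|·|S|·|T|) and |{(a,b,c) : (a,b) ∈ R^light, (a,c) ∈ T}| ≤ √(|R|·|S|·|T|). -/

import Mathlib

open Finset

lemma card_filter_product {α β : Type*} (X : Finset α) (Y : Finset β)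
    (P : α → β → Prop) [∀ a b, Decidable (P a b)] :
    ((X ×ˢ Y).filter (fun p => P p.1 p.2)).card
      = ∑ x ∈ X, (Y.filter (fun y => P x y)).card := by
  rw [Finset.card_filter, Finset.sum_product]
  refine Finset.sum_congr rfl fun x _ => ?_
  rw [Finset.card_filter]

lemma fiber_sum_le {β γ : Type*} [DecidableEq β] (S : Finset γ) (g : γ → β)
    (Bs : Finset β) :
    ∑ b ∈ Bs, (S.filter fun s => g s = b).card ≤ S.card := by
  rw [Finset.sum_card_fiberwise_eq_card_filter]
  exact Finset.card_filter_le _ _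

theorem heavy_light_triangle_analysis
    {A B C : Type*} [DecidableEq A] [DecidableEq B] [DecidableEq C]
    (R : Finset (A × B)) (S : Finset (B × C)) (T : Finset (A × C))
    (hR : 1 ≤ R.card) (hS : 1 ≤ S.card) (hT : 1 ≤ T.card) :
    let θ : ℝ := Real.sqrt ((R.card : ℝ) * (S.card : ℝ) / (T.card : ℝ))
    let Rheavy := R.filter (fun p => θ < ((R.filter (fun q => q.1 = p.1)).card : ℝ))
    let Rlight := R \ Rheavy
    ((((Rheavy ×ˢ S).filter (fun p => p.1.2 = p.2.1)).card : ℝ)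
        ≤ Real.sqrt ((R.card : ℝ) * (S.card : ℝ) * (T.card : ℝ))) ∧
    ((((Rlight ×ˢ T).filter (fun p => p.1.1 = p.2.1)).card : ℝ)
        ≤ Real.sqrt ((R.card : ℝ) * (S.card : ℝ) * (T.card : ℝ))) := by
  intro θ Rheavy Rlight
  classical
  set rR := (R.card : ℝ) with hrR
  set rS := (S.card : ℝ) with hrS
  set rT := (T.card : ℝ) with hrT
  have hrR1 : (1 : ℝ) ≤ rR := by rw [hrR]; exact_mod_cast hR
  have hrS1 : (1 : ℝ) ≤ rS := by rw [hrS]; exact_mod_cast hS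
  have hrT1 : (1 : ℝ) ≤ rT := by rw [hrT]; exact_mod_cast hT
  have hrRpos : 0 < rR := by linarith
  have hrSpos : 0 < rS := by linarith
  have hrTpos : 0 < rT := by linarith
  have hθpos : 0 < θ := Real.sqrt_pos.2 (by positivity)
  -- θ * sqrt(rR*rS*rT) = rR * rS
  have hkey : θ * Real.sqrt (rR * rS * rT) = rR * rS := by
    rw [show θ = Real.sqrt (rR * rS / rT) from rfl,
      ← Real.sqrt_mul (by positivity)]
    rw [show rR * rS / rT * (rR * rS * rT) = (rR * rS) ^ 2 by field_simp]
    exact Real.sqrt_sq (by positivity)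
  -- and θ * rT = sqrt(rR*rS*rT)
  have hkey2 : θ * rT = Real.sqrt (rR * rS * rT) := by
    rw [show θ = Real.sqrt (rR * rS / rT) from rfl,
      show rT = Real.sqrt (rT ^ 2) from (Real.sqrt_sq hrTpos.le).symm,
      ← Real.sqrt_mul (by positivity)]
    congr 1
    field_simp
    ring
    rw [Real.sq_sqrt (by positivity)]
  constructor
  · -- heavy part
    set H := Rheavy.image Prod.fst with hH
    have hmaps : ∀ p ∈ Rheavy, p.1 ∈ H := fun p hp => Finset.mem_image_of_mem _ hp
    have hcount : (((Rheavy ×ˢ S).filter (fun p => p.1.2 = p.2.1)).card : ℕ)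
        = ∑ p ∈ Rheavy, (S.filter (fun s => p.2 = s.1)).card := by
      rw [card_filter_product Rheavy S (fun p s => p.2 = s.1)]
    have hgroup : ∑ p ∈ Rheavy, (S.filter (fun s => p.2 = s.1)).card
        = ∑ a ∈ H, ∑ p ∈ Rheavy.filter (fun p => p.1 = a),
            (S.filter (fun s => p.2 = s.1)).card :=
      (Finset.sum_fiberwise_of_maps_to hmaps _).symm
    -- inner sum ≤ S.card
    have hinner : ∀ a ∈ H, ∑ p ∈ Rheavy.filter (fun p => p.1 = a),
        (S.filter (fun s => p.2 = s.1)).card ≤ S.card := by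
      intro a _
      have hinj : Set.InjOn Prod.snd (↑(Rheavy.filter (fun p => p.1 = a)) : Set (A × B)) := by
        intro p hp q hq h
        simp only [Finset.coe_filter, Set.mem_setOf_eq] at hp hq
        exact Prod.ext (hp.2.trans hq.2.symm) h
      calc ∑ p ∈ Rheavy.filter (fun p => p.1 = a), (S.filter (fun s => p.2 = s.1)).card
          = ∑ b ∈ (Rheavy.filter (fun p => p.1 = a)).image Prod.snd,
              (S.filter (fun s => b = s.1)).card :=
            (Finset.sum_image (g := Prod.snd)
              (f := fun b => (S.filter (fun s => b = s.1)).card) hinj).symm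
        _ = ∑ b ∈ (Rheavy.filter (fun p => p.1 = a)).image Prod.snd,
              (S.filter (fun s => s.1 = b)).card := by
              refine Finset.sum_congr rfl fun b _ => ?_
              congr 1
              apply Finset.filter_congr
              intro s _
              exact eq_comm
        _ ≤ S.card := fiber_sum_le S Prod.fst _
    have hN1 : (((Rheavy ×ˢ S).filter (fun p => p.1.2 = p.2.1)).card : ℕ)
        ≤ H.card * S.card := by
      rw [hcount, hgroup]
      calc ∑ a ∈ H, ∑ p ∈ Rheavy.filter (fun p => p.1 = a),
              (S.filter (fun s => p.2 = s.1)).card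
          ≤ ∑ _a ∈ H, S.card := Finset.sum_le_sum hinner
        _ = H.card * S.card := by rw [Finset.sum_const, smul_eq_mul]
    -- H.card * θ ≤ rR
    have hHsmall : (H.card : ℝ) * θ ≤ rR := by
      have hsum : ∑ a ∈ H, (R.filter (fun q => q.1 = a)).card ≤ R.card :=
        fiber_sum_le R Prod.fst H
      have hdeg : ∀ a ∈ H, θ ≤ ((R.filter (fun q => q.1 = a)).card : ℝ) := by
        intro a ha
        obtain ⟨p, hp, rfl⟩ := Finset.mem_image.1 ha
        have := (Finset.mem_filter.1 hp).2
        exact this.le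
      calc (H.card : ℝ) * θ = ∑ _a ∈ H, θ := by
            rw [Finset.sum_const, nsmul_eq_mul]
        _ ≤ ∑ a ∈ H, ((R.filter (fun q => q.1 = a)).card : ℝ) :=
            Finset.sum_le_sum hdeg
        _ = ((∑ a ∈ H, (R.filter (fun q => q.1 = a)).card : ℕ) : ℝ) := by
            push_cast; ring
        _ ≤ rR := by rw [hrR]; exact_mod_cast hsum
    have hHle : (H.card : ℝ) ≤ rR / θ := by
      rw [le_div_iff₀ hθpos]; exact hHsmall
    calc (((Rheavy ×ˢ S).filter (fun p => p.1.2 = p.2.1)).card : ℝ)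
        ≤ (H.card : ℝ) * rS := by rw [hrS]; exact_mod_cast hN1
      _ ≤ (rR / θ) * rS := by
          have := mul_le_mul_of_nonneg_right hHle hrSpos.le
          linarith
      _ = Real.sqrt (rR * rS * rT) := by
          rw [div_mul_eq_mul_div, eq_comm, eq_div_iff hθpos.ne', mul_comm]
          exact hkey
  · -- light part
    set L := Rlight.image Prod.fst with hL
    have hmaps : ∀ p ∈ Rlight, p.1 ∈ L := fun p hp => Finset.mem_image_of_mem _ hp
    have hcount : (((Rlight ×ˢ T).filter (fun p => p.1.1 = p.2.1)).card : ℕ)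
        = ∑ p ∈ Rlight, (T.filter (fun t => p.1 = t.1)).card := by
      rw [card_filter_product Rlight T (fun p t => p.1 = t.1)]
    have hgroup : ∑ p ∈ Rlight, (T.filter (fun t => p.1 = t.1)).card
        = ∑ a ∈ L, (Rlight.filter (fun p => p.1 = a)).card
            * (T.filter (fun t => a = t.1)).card := by
      rw [← Finset.sum_fiberwise_of_maps_to hmaps
        (fun p => (T.filter (fun t => p.1 = t.1)).card)]
      refine Finset.sum_congr rfl fun a _ => ?_
      rw [Finset.sum_congr rfl (fun p hp => ?_), Finset.sum_const, smul_eq_mul]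
      have : p.1 = a := (Finset.mem_filter.1 hp).2
      rw [this]
    -- per-a bounds
    have hfib : ∀ a ∈ L, ((Rlight.filter (fun p => p.1 = a)).card : ℝ) ≤ θ := by
      intro a ha
      obtain ⟨p, hp, rfl⟩ := Finset.mem_image.1 ha
      have hpR : p ∈ R := (Finset.mem_sdiff.1 hp).1
      have hnp : ¬ θ < ((R.filter (fun q => q.1 = p.1)).card : ℝ) := by
        intro hlt
        exact (Finset.mem_sdiff.1 hp).2 (Finset.mem_filter.2 ⟨hpR, hlt⟩)
      push_neg at hnp
      refine le_trans ?_ hnp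
      have hsub : Rlight.filter (fun q => q.1 = p.1) ⊆ R.filter (fun q => q.1 = p.1) :=
        Finset.filter_subset_filter _ (Finset.sdiff_subset)
      exact_mod_cast Finset.card_le_card hsub
    have hTsum : ∑ a ∈ L, (T.filter (fun t => a = t.1)).card ≤ T.card := by
      calc ∑ a ∈ L, (T.filter (fun t => a = t.1)).card
          = ∑ a ∈ L, (T.filter (fun t => t.1 = a)).card := by
            refine Finset.sum_congr rfl fun a _ => ?_
            congr 1
            apply Finset.filter_congr
            intro t _
            exact eq_comm
        _ ≤ T.card := fiber_sum_le T Prod.fst L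
    calc (((Rlight ×ˢ T).filter (fun p => p.1.1 = p.2.1)).card : ℝ)
        = ∑ a ∈ L, ((Rlight.filter (fun p => p.1 = a)).card : ℝ)
            * ((T.filter (fun t => a = t.1)).card : ℝ) := by
          have h := hcount.trans hgroup
          rw [h]
          push_cast
          rfl
      _ ≤ ∑ a ∈ L, θ * ((T.filter (fun t => a = t.1)).card : ℝ) := by
          refine Finset.sum_le_sum fun a ha => ?_
          exact mul_le_mul_of_nonneg_right (hfib a ha) (by positivity)
      _ = θ * ((∑ a ∈ L, (T.filter (fun t => a = t.1)).card : ℕ) : ℝ) := by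
          rw [← Finset.mul_sum]; push_cast; ring
      _ ≤ θ * rT := by
          have : ((∑ a ∈ L, (T.filter (fun t => a = t.1)).card : ℕ) : ℝ) ≤ rT := by
            rw [hrT]; exact_mod_cast hTsum
          exact mul_le_mul_of_nonneg_left this hθpos.le
      _ = Real.sqrt (rR * rS * rT) := hkey2
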